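/- Let T > 0, let μ, ν, h : [0,T] → [0,∞) be Lebesgue measurable with μ and ν² integrable on [0,T] and μ(s) + ν(s)² > 0 for almost every s. Let θ > 1 and set β := (3θ+1)/4 and ρ := (θ+1)/2. Then (∫₀ᵀ exp(∫₀ˢ (β·μ(r) + (ρ/2)·ν(r)²) dr) · h(s) ds)² ≤ (2/(θ−1)) · ∫₀ᵀ exp(2θ·∫₀ˢ (μ(r) + (1/2)·ν(r)²) dr) · h(s)²/(μ(s) + ν(s)²) ds, where both sides are interpreted as Lebesgue integrals of nonnegative functions (the inequality holds in [0,∞]). -/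

import Mathlib

open MeasureTheory

namespace H1Aux

open Set Real

/-- `∫₀¹ (-log t) dt = 1`, via the layer cake formula. -/
lemma lintegral_neg_log : ∫⁻ t in Set.Ioc (0:ℝ) 1, ENNReal.ofReal (-Real.log t) = 1 := by
  have hnn : 0 ≤ᵐ[volume.restrict (Set.Ioc (0:ℝ) 1)] fun t => -Real.log t := by
    filter_upwards [ae_restrict_mem measurableSet_Ioc] with t ht
    have := Real.log_nonpos ht.1.le ht.2
    show (0:ℝ) ≤ -Real.log t
    linarith
  rw [lintegral_eq_lintegral_meas_lt _ hnn Real.measurable_log.neg.aemeasurable]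
  have hset : ∀ u : ℝ, u ∈ Set.Ioi (0:ℝ) →
      (volume.restrict (Set.Ioc (0:ℝ) 1)) {t : ℝ | u < -Real.log t}
        = ENNReal.ofReal (Real.exp (-u)) := by
    intro u hu
    have hmeas : MeasurableSet {t : ℝ | u < -Real.log t} :=
      measurableSet_lt measurable_const Real.measurable_log.neg
    rw [Measure.restrict_apply hmeas]
    have : {t : ℝ | u < -Real.log t} ∩ Set.Ioc (0:ℝ) 1 = Set.Ioo (0:ℝ) (Real.exp (-u)) := by
      ext t
      simp only [Set.mem_inter_iff, Set.mem_setOf_eq, Set.mem_Ioc, Set.mem_Ioo]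
      constructor
      · rintro ⟨hlt, ht0, _⟩
        refine ⟨ht0, ?_⟩
        rw [← Real.log_lt_iff_lt_exp ht0]
        linarith
      · rintro ⟨ht0, hlt⟩
        have h1 : Real.log t < -u := (Real.log_lt_iff_lt_exp ht0).2 hlt
        have h2 : Real.exp (-u) ≤ 1 := by
          rw [show (1:ℝ) = Real.exp 0 by simp]
          exact Real.exp_le_exp.2 (by linarith [hu.out])
        exact ⟨by linarith, ht0, by linarith⟩
    rw [this, Real.volume_Ioo, sub_zero]
  calc ∫⁻ u in Set.Ioi (0:ℝ), (volume.restrict (Set.Ioc (0:ℝ) 1)) {t : ℝ | u < -Real.log t}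
      = ∫⁻ u in Set.Ioi (0:ℝ), ENNReal.ofReal (Real.exp (-u)) := by
        refine lintegral_congr_ae ?_
        filter_upwards [ae_restrict_mem measurableSet_Ioi] with u hu using hset u hu
    _ = ENNReal.ofReal (∫ u in Set.Ioi (0:ℝ), Real.exp (-u)) := by
        rw [ofReal_integral_eq_lintegral_ofReal]
        · exact (by simpa using exp_neg_integrableOn_Ioi (0:ℝ) (one_pos) :
            IntegrableOn (fun u : ℝ => Real.exp (-u)) (Set.Ioi 0))
        · exact Filter.Eventually.of_forall fun u => (Real.exp_pos _).le
    _ = 1 := by rw [integral_exp_neg_Ioi_zero, ENNReal.ofReal_one]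

/-- The key pathwise bound: `∫₀ᵀ e^{-c F(s)} g(s) ds ≤ 1/c` where `F(s) = ∫₀ˢ g`. -/
lemma key (T c : ℝ) (hc : 0 < c) (g : ℝ → ℝ) (hgm : Measurable g)
    (hfin : ∫⁻ r in Set.Ioc (0:ℝ) T, ENNReal.ofReal (g r) ≠ ⊤) :
    ∫⁻ s in Set.Ioc (0:ℝ) T,
        ENNReal.ofReal
          (Real.exp (-(c * (∫⁻ r in Set.Ioc (0:ℝ) s, ENNReal.ofReal (g r)).toReal)) * g s)
      ≤ ENNReal.ofReal (1 / c) := by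
  set d : ℝ → ENNReal := fun r => ENNReal.ofReal (g r) with hd
  have hdmeas : Measurable d := ENNReal.measurable_ofReal.comp hgm
  set Φ : ℝ → ENNReal := fun s => ∫⁻ r in Set.Ioc (0:ℝ) s, d r with hΦ
  have hΦmono : Monotone Φ := fun s s' hss =>
    lintegral_mono_set (Set.Ioc_subset_Ioc_right hss)
  have hΦmeas : Measurable Φ := hΦmono.measurable
  set G : ℝ → ℝ := fun s => (Φ s).toReal with hG
  have hGmeas : Measurable G := ENNReal.measurable_toReal.comp hΦmeas
  have hGnn : ∀ s, 0 ≤ G s := fun s => ENNReal.toReal_nonneg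
  have hΦfin : ∀ s ∈ Set.Ioc (0:ℝ) T, Φ s ≠ ⊤ := fun s hs =>
    ne_top_of_le_ne_top hfin (lintegral_mono_set (Set.Ioc_subset_Ioc_right hs.2))
  set νm : Measure ℝ := (volume.restrict (Set.Ioc (0:ℝ) T)).withDensity d with hνm
  -- Step 1: rewrite as an integral against the density measure
  have step1 : ∫⁻ s in Set.Ioc (0:ℝ) T, ENNReal.ofReal (Real.exp (-(c * G s)) * g s)
      = ∫⁻ s, ENNReal.ofReal (Real.exp (-(c * G s))) ∂νm := by
    have hexp : Measurable fun s => ENNReal.ofReal (Real.exp (-(c * G s))) :=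
      (Measurable.exp ((measurable_const.mul hGmeas).neg)).ennreal_ofReal
    rw [hνm, lintegral_withDensity_eq_lintegral_mul _ hdmeas hexp]
    refine lintegral_congr fun s => ?_
    simp only [Pi.mul_apply, hd]
    rw [ENNReal.ofReal_mul (Real.exp_nonneg _), mul_comm]
  -- Step 2: layer cake
  have step2 : ∫⁻ s, ENNReal.ofReal (Real.exp (-(c * G s))) ∂νm
      = ∫⁻ t in Set.Ioi (0:ℝ), νm {s : ℝ | t < Real.exp (-(c * G s))} :=
    lintegral_eq_lintegral_meas_lt νm
      (Filter.Eventually.of_forall fun s => (Real.exp_pos _).le)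
      ((Measurable.exp ((measurable_const.mul hGmeas).neg)).aemeasurable)
  -- Core bound on sublevel sets of G
  have core : ∀ τ : ℝ, νm {s : ℝ | G s < τ} ≤ ENNReal.ofReal τ := by
    intro τ
    have hmeasS : MeasurableSet {s : ℝ | G s < τ} := measurableSet_lt hGmeas measurable_const
    rw [hνm, withDensity_apply _ hmeasS, Measure.restrict_restrict hmeasS]
    set S : Set ℝ := {s : ℝ | G s < τ} ∩ Set.Ioc (0:ℝ) T with hS
    have hkey : ∀ s ∈ S, Φ s < ENNReal.ofReal τ := by
      intro s hs
      rw [ENNReal.lt_ofReal_iff_toReal_lt (hΦfin s hs.2)]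
      exact hs.1
    rcases S.eq_empty_or_nonempty with hSe | hSe
    · rw [hSe]; simp
    · have hbdd : BddAbove S := ⟨T, fun s hs => hs.2.2⟩
      set u := sSup S with hu
      by_cases huS : u ∈ S
      · have hsub : S ⊆ Set.Ioc (0:ℝ) u := fun s hs => ⟨hs.2.1, le_csSup hbdd hs⟩
        calc ∫⁻ s in S, d s ≤ ∫⁻ s in Set.Ioc (0:ℝ) u, d s := lintegral_mono_set hsub
          _ = Φ u := rfl
          _ ≤ ENNReal.ofReal τ := (hkey u huS).le
      · obtain ⟨a, hamono, hatend, haS⟩ := exists_seq_tendsto_sSup hSe hbdd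
        have hsub : S ⊆ ⋃ n, Set.Ioc (0:ℝ) (a n) := by
          intro s hs
          have hsu : s < u := lt_of_le_of_ne (le_csSup hbdd hs) fun e => huS (e ▸ hs)
          obtain ⟨n, hn⟩ : ∃ n, s ≤ a n := by
            by_contra hcon
            push_neg at hcon
            exact absurd (le_of_tendsto' hatend fun n => (hcon n).le) (not_le.2 hsu)
          exact Set.mem_iUnion.2 ⟨n, ⟨hs.2.1, hn⟩⟩
        calc ∫⁻ s in S, d s
            ≤ ∫⁻ s in ⋃ n, Set.Ioc (0:ℝ) (a n), d s := lintegral_mono_set hsub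
          _ = volume.withDensity d (⋃ n, Set.Ioc (0:ℝ) (a n)) :=
              (withDensity_apply d (MeasurableSet.iUnion fun n => measurableSet_Ioc)).symm
          _ = ⨆ n, volume.withDensity d (Set.Ioc (0:ℝ) (a n)) :=
              Directed.measure_iUnion
                (Monotone.directed_le fun n m hnm => Set.Ioc_subset_Ioc_right (hamono hnm))
          _ ≤ ENNReal.ofReal τ := by
              refine iSup_le fun n => ?_
              rw [withDensity_apply d measurableSet_Ioc]
              exact (hkey (a n) (haS n)).le
  -- Bound the level sets of the exponential
  have bound : ∀ t ∈ Set.Ioi (0:ℝ), νm {s : ℝ | t < Real.exp (-(c * G s))}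
      ≤ Set.indicator (Set.Ioc (0:ℝ) 1)
          (fun t => ENNReal.ofReal (1 / c) * ENNReal.ofReal (-Real.log t)) t := by
    intro t ht
    by_cases ht1 : t ∈ Set.Ioc (0:ℝ) 1
    · rw [Set.indicator_of_mem ht1]
      have hset : {s : ℝ | t < Real.exp (-(c * G s))} = {s : ℝ | G s < -Real.log t / c} := by
        ext s
        simp only [Set.mem_setOf_eq]
        rw [lt_div_iff₀ hc, ← Real.log_lt_iff_lt_exp ht1.1]
        constructor <;> intro hh <;> linarith
      rw [hset, ← ENNReal.ofReal_mul (by positivity)]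
      have : 1 / c * -Real.log t = -Real.log t / c := by ring
      rw [this]
      exact core _
    · rw [Set.indicator_of_notMem ht1]
      have hte : {s : ℝ | t < Real.exp (-(c * G s))} = ∅ := by
        ext s
        simp only [Set.mem_setOf_eq, Set.mem_empty_iff_false, iff_false, not_lt]
        have h1 : Real.exp (-(c * G s)) ≤ 1 := by
          rw [show (1:ℝ) = Real.exp 0 by simp]
          exact Real.exp_le_exp.2 (by nlinarith [hGnn s, hc.le])
        have h2 : 1 < t := by
          by_contra hle
          exact ht1 ⟨ht, not_lt.1 hle⟩
        linarith
      rw [hte]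
      simp
  calc ∫⁻ s in Set.Ioc (0:ℝ) T, ENNReal.ofReal (Real.exp (-(c * G s)) * g s)
      = ∫⁻ t in Set.Ioi (0:ℝ), νm {s : ℝ | t < Real.exp (-(c * G s))} := by
        rw [step1, step2]
    _ ≤ ∫⁻ t in Set.Ioi (0:ℝ), Set.indicator (Set.Ioc (0:ℝ) 1)
          (fun t => ENNReal.ofReal (1 / c) * ENNReal.ofReal (-Real.log t)) t := by
        refine lintegral_mono_ae ?_
        filter_upwards [ae_restrict_mem measurableSet_Ioi] with t ht using bound t ht
    _ = ∫⁻ t in Set.Ioc (0:ℝ) 1,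
          ENNReal.ofReal (1 / c) * ENNReal.ofReal (-Real.log t) := by
        rw [lintegral_indicator measurableSet_Ioc, Measure.restrict_restrict measurableSet_Ioc,
          Set.inter_eq_self_of_subset_left (fun x hx => hx.1)]
    _ = ENNReal.ofReal (1 / c) * ∫⁻ t in Set.Ioc (0:ℝ) 1, ENNReal.ofReal (-Real.log t) :=
        lintegral_const_mul _ (Real.measurable_log.neg.ennreal_ofReal)
    _ = ENNReal.ofReal (1 / c) := by rw [lintegral_neg_log, mul_one]

end H1Aux

/-- Remark 3.3(ii): the Cauchy–Schwarz computation showing that (H1a) implies (H1).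
With `θ > 1`, `β := (3θ+1)/4` and `ρ := (θ+1)/2`,
`(∫₀ᵀ exp(∫₀ˢ (βμ + (ρ/2)ν²)) h(s) ds)² ≤ (2/(θ−1)) ∫₀ᵀ exp(2θ∫₀ˢ(μ + ν²/2)) h(s)²/(μ(s)+ν(s)²) ds`,
both sides interpreted as Lebesgue integrals of nonnegative functions in `[0,∞]`. -/
theorem weighted_cauchy_schwarz_H1a_implies_H1 (T : ℝ) (hT : 0 < T) (μ ν h : ℝ → ℝ)
    (hμm : Measurable μ) (hνm : Measurable ν) (hhm : Measurable h)
    (hμ0 : ∀ s ∈ Set.Icc (0:ℝ) T, 0 ≤ μ s)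
    (hν0 : ∀ s ∈ Set.Icc (0:ℝ) T, 0 ≤ ν s)
    (hh0 : ∀ s ∈ Set.Icc (0:ℝ) T, 0 ≤ h s)
    (hμint : IntegrableOn μ (Set.Icc 0 T))
    (hνint : IntegrableOn (fun s => (ν s) ^ 2) (Set.Icc 0 T))
    (hpos : ∀ᵐ s ∂(volume.restrict (Set.Icc (0:ℝ) T)), 0 < μ s + (ν s) ^ 2)
    (θ β ρ : ℝ) (hθ : 1 < θ) (hβ : β = (3 * θ + 1) / 4) (hρ : ρ = (θ + 1) / 2) :
    (∫⁻ s in Set.Ioc (0:ℝ) T,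
        ENNReal.ofReal
          (Real.exp (∫ r in Set.Ioc (0:ℝ) s, (β * μ r + ρ / 2 * (ν r) ^ 2)) * h s)) ^ 2
      ≤ ENNReal.ofReal (2 / (θ - 1)) *
        ∫⁻ s in Set.Ioc (0:ℝ) T,
          ENNReal.ofReal
            (Real.exp (2 * θ * ∫ r in Set.Ioc (0:ℝ) s, (μ r + 1 / 2 * (ν r) ^ 2)) *
              ((h s) ^ 2 / (μ s + (ν s) ^ 2))) := by
  classical
  set c : ℝ := (θ - 1) / 4 with hc
  set w₁ : ℝ → ℝ := fun r => μ r + 1 / 2 * (ν r) ^ 2 with hw1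
  set w₂ : ℝ → ℝ := fun r => μ r + (ν r) ^ 2 with hw2
  have hw1meas : Measurable w₁ := hμm.add ((hνm.pow_const 2).const_mul (1 / 2))
  have hw2meas : Measurable w₂ := hμm.add (hνm.pow_const 2)
  have hw1int : IntegrableOn w₁ (Set.Icc 0 T) := hμint.add (hνint.const_mul (1 / 2))
  have hw2int : IntegrableOn w₂ (Set.Icc 0 T) := hμint.add hνint
  have hw1nn : ∀ r ∈ Set.Icc (0:ℝ) T, 0 ≤ w₁ r := fun r hr =>
    add_nonneg (hμ0 r hr) (by positivity)
  have hw2nn : ∀ r ∈ Set.Icc (0:ℝ) T, 0 ≤ w₂ r := fun r hr =>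
    add_nonneg (hμ0 r hr) (sq_nonneg _)
  have key_eq : ∀ (w : ℝ → ℝ), IntegrableOn w (Set.Icc 0 T) →
      (∀ r ∈ Set.Icc (0:ℝ) T, 0 ≤ w r) → ∀ s ∈ Set.Ioc (0:ℝ) T,
      (∫ r in Set.Ioc (0:ℝ) s, w r)
        = (∫⁻ r in Set.Ioc (0:ℝ) s, ENNReal.ofReal (w r)).toReal := by
    intro w hint h0 s hs
    have hsub : Set.Ioc (0:ℝ) s ⊆ Set.Icc 0 T := fun r hr => ⟨hr.1.le, hr.2.trans hs.2⟩
    rw [integral_eq_lintegral_of_nonneg_ae]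
    · refine ae_restrict_of_ae_restrict_of_subset hsub ?_
      filter_upwards [ae_restrict_mem measurableSet_Icc] with r hr
      exact h0 r hr
    · exact (hint.mono_set hsub).1
  set G₁ : ℝ → ℝ := fun s => (∫⁻ r in Set.Ioc (0:ℝ) s, ENNReal.ofReal (w₁ r)).toReal with hG1
  set G₂ : ℝ → ℝ := fun s => (∫⁻ r in Set.Ioc (0:ℝ) s, ENNReal.ofReal (w₂ r)).toReal with hG2
  have hG1meas : Measurable G₁ := by
    refine ENNReal.measurable_toReal.comp (Monotone.measurable fun s s' hss => ?_)
    exact lintegral_mono_set (Set.Ioc_subset_Ioc_right hss)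
  have hG2meas : Measurable G₂ := by
    refine ENNReal.measurable_toReal.comp (Monotone.measurable fun s s' hss => ?_)
    exact lintegral_mono_set (Set.Ioc_subset_Ioc_right hss)
  have hexp_eq : ∀ s ∈ Set.Ioc (0:ℝ) T,
      (∫ r in Set.Ioc (0:ℝ) s, (β * μ r + ρ / 2 * (ν r) ^ 2)) = θ * G₁ s - c * G₂ s := by
    intro s hs
    have hsub : Set.Ioc (0:ℝ) s ⊆ Set.Icc 0 T := fun r hr => ⟨hr.1.le, hr.2.trans hs.2⟩
    have h1 : IntegrableOn (fun r => θ * w₁ r) (Set.Ioc (0:ℝ) s) :=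
      (hw1int.mono_set hsub).const_mul θ
    have h2 : IntegrableOn (fun r => c * w₂ r) (Set.Ioc (0:ℝ) s) :=
      (hw2int.mono_set hsub).const_mul c
    have heq : (fun r => β * μ r + ρ / 2 * (ν r) ^ 2) = fun r => θ * w₁ r - c * w₂ r := by
      funext r
      simp only [hw1, hw2, hβ, hρ, hc]
      ring
    rw [heq, integral_sub h1 h2, integral_const_mul, integral_const_mul,
      key_eq w₁ hw1int hw1nn s hs, key_eq w₂ hw2int hw2nn s hs]
  set Fb : ℝ → ENNReal :=
    fun s => ENNReal.ofReal (Real.exp (θ * G₁ s) * (h s / Real.sqrt (w₂ s))) with hFb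
  set Gb : ℝ → ENNReal :=
    fun s => ENNReal.ofReal (Real.exp (-(c * G₂ s)) * Real.sqrt (w₂ s)) with hGb
  have hsqrtm : Measurable fun s => Real.sqrt (w₂ s) :=
    Real.continuous_sqrt.measurable.comp hw2meas
  have hFbmeas : Measurable Fb :=
    ((Measurable.exp (measurable_const.mul hG1meas)).mul (hhm.div hsqrtm)).ennreal_ofReal
  have hGbmeas : Measurable Gb :=
    ((Measurable.exp ((measurable_const.mul hG2meas).neg)).mul hsqrtm).ennreal_ofReal
  have hpos' : ∀ᵐ s ∂volume.restrict (Set.Ioc (0:ℝ) T), 0 < μ s + (ν s) ^ 2 :=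
    ae_restrict_of_ae_restrict_of_subset Set.Ioc_subset_Icc_self hpos
  -- Step B : rewrite the left-hand integrand as a product
  have stepB : (∫⁻ s in Set.Ioc (0:ℝ) T,
      ENNReal.ofReal
        (Real.exp (∫ r in Set.Ioc (0:ℝ) s, (β * μ r + ρ / 2 * (ν r) ^ 2)) * h s))
      = ∫⁻ s in Set.Ioc (0:ℝ) T, (Fb * Gb) s := by
    refine lintegral_congr_ae ?_
    filter_upwards [ae_restrict_mem measurableSet_Ioc, hpos'] with s hs hws
    rw [hexp_eq s hs]
    have hsI : s ∈ Set.Icc (0:ℝ) T := Set.Ioc_subset_Icc_self hs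
    have hhs : 0 ≤ h s := hh0 s hsI
    have hw2s : 0 < w₂ s := hws
    have hsq : Real.sqrt (w₂ s) ≠ 0 := ne_of_gt (Real.sqrt_pos.2 hw2s)
    simp only [Pi.mul_apply, hFb, hGb]
    rw [← ENNReal.ofReal_mul (by positivity)]
    congr 1
    rw [show Real.exp (θ * G₁ s - c * G₂ s)
        = Real.exp (θ * G₁ s) * Real.exp (-(c * G₂ s)) by rw [← Real.exp_add]; ring_nf]
    field_simp
  -- Cauchy–Schwarz
  have hconj : Real.HolderConjugate 2 2 := Real.HolderConjugate.two_two
  have hCS := ENNReal.lintegral_mul_le_Lp_mul_Lq (volume.restrict (Set.Ioc (0:ℝ) T)) hconj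
    hFbmeas.aemeasurable hGbmeas.aemeasurable
  -- Step E : bound for the second factor
  have h2c : (0:ℝ) < (θ - 1) / 2 := by linarith
  have stepE : (∫⁻ s in Set.Ioc (0:ℝ) T, Gb s ^ (2:ℝ)) ≤ ENNReal.ofReal (2 / (θ - 1)) := by
    have congr1 : ∀ᵐ s ∂volume.restrict (Set.Ioc (0:ℝ) T), Gb s ^ (2:ℝ)
        = ENNReal.ofReal (Real.exp (-((θ - 1) / 2 *
            (∫⁻ r in Set.Ioc (0:ℝ) s, ENNReal.ofReal (w₂ r)).toReal)) * w₂ s) := by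
      filter_upwards [ae_restrict_mem measurableSet_Ioc] with s hs
      have hsI : s ∈ Set.Icc (0:ℝ) T := Set.Ioc_subset_Icc_self hs
      have hw2s : 0 ≤ w₂ s := hw2nn s hsI
      rw [hGb, ENNReal.ofReal_rpow_of_nonneg (by positivity) (by norm_num)]
      congr 1
      rw [show (Real.exp (-(c * G₂ s)) * Real.sqrt (w₂ s)) ^ (2:ℝ)
          = (Real.exp (-(c * G₂ s)) * Real.sqrt (w₂ s)) ^ (2:ℕ) by
        rw [show ((2:ℝ)) = ((2:ℕ):ℝ) by norm_num, Real.rpow_natCast]]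
      rw [mul_pow, Real.sq_sqrt hw2s, sq, ← Real.exp_add]
      have hG2s : -(c * G₂ s) + -(c * G₂ s)
          = -((θ - 1) / 2 * (∫⁻ r in Set.Ioc (0:ℝ) s, ENNReal.ofReal (w₂ r)).toReal) := by
        rw [hG2, hc]; ring
      rw [hG2s]
    rw [lintegral_congr_ae congr1]
    have hfin : (∫⁻ r in Set.Ioc (0:ℝ) T, ENNReal.ofReal (w₂ r)) ≠ ⊤ := by
      have hint2 : IntegrableOn w₂ (Set.Ioc (0:ℝ) T) := hw2int.mono_set Set.Ioc_subset_Icc_self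
      exact ne_of_lt (lt_of_le_of_lt (lintegral_ofReal_le_lintegral_enorm w₂) hint2.2)
    have hk := H1Aux.key T ((θ - 1) / 2) h2c w₂ hw2meas hfin
    calc (∫⁻ s in Set.Ioc (0:ℝ) T,
        ENNReal.ofReal (Real.exp (-((θ - 1) / 2 *
          (∫⁻ r in Set.Ioc (0:ℝ) s, ENNReal.ofReal (w₂ r)).toReal)) * w₂ s))
        ≤ ENNReal.ofReal (1 / ((θ - 1) / 2)) := hk
      _ = ENNReal.ofReal (2 / (θ - 1)) := by rw [one_div_div]
  -- Step F : identify the first factor with the right-hand integral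
  have stepF : (∫⁻ s in Set.Ioc (0:ℝ) T, Fb s ^ (2:ℝ))
      = ∫⁻ s in Set.Ioc (0:ℝ) T,
          ENNReal.ofReal
            (Real.exp (2 * θ * ∫ r in Set.Ioc (0:ℝ) s, (μ r + 1 / 2 * (ν r) ^ 2)) *
              ((h s) ^ 2 / (μ s + (ν s) ^ 2))) := by
    refine lintegral_congr_ae ?_
    filter_upwards [ae_restrict_mem measurableSet_Ioc] with s hs
    have hsI : s ∈ Set.Icc (0:ℝ) T := Set.Ioc_subset_Icc_self hs
    have hw2s : 0 ≤ w₂ s := hw2nn s hsI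
    have hhs : 0 ≤ h s := hh0 s hsI
    rw [hFb, ENNReal.ofReal_rpow_of_nonneg (by positivity) (by norm_num)]
    congr 1
    rw [show (Real.exp (θ * G₁ s) * (h s / Real.sqrt (w₂ s))) ^ (2:ℝ)
        = (Real.exp (θ * G₁ s) * (h s / Real.sqrt (w₂ s))) ^ (2:ℕ) by
      rw [show ((2:ℝ)) = ((2:ℕ):ℝ) by norm_num, Real.rpow_natCast]]
    rw [mul_pow, div_pow, Real.sq_sqrt hw2s]
    have hint_eq : (∫ r in Set.Ioc (0:ℝ) s, (μ r + 1 / 2 * (ν r) ^ 2)) = G₁ s :=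
      key_eq w₁ hw1int hw1nn s hs
    rw [hint_eq]
    have : μ s + (ν s) ^ 2 = w₂ s := by rw [hw2]
    rw [this, sq, ← Real.exp_add]
    ring_nf
  -- Assemble
  have hhalf : ∀ X : ENNReal, (X ^ ((1:ℝ) / 2)) ^ (2:ℕ) = X := by
    intro X
    rw [← ENNReal.rpow_natCast (X ^ ((1:ℝ) / 2)) 2, ← ENNReal.rpow_mul]
    norm_num
  calc (∫⁻ s in Set.Ioc (0:ℝ) T,
      ENNReal.ofReal
        (Real.exp (∫ r in Set.Ioc (0:ℝ) s, (β * μ r + ρ / 2 * (ν r) ^ 2)) * h s)) ^ 2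
      = (∫⁻ s in Set.Ioc (0:ℝ) T, (Fb * Gb) s) ^ 2 := by rw [stepB]
    _ ≤ ((∫⁻ s in Set.Ioc (0:ℝ) T, Fb s ^ (2:ℝ)) ^ ((1:ℝ) / 2) *
          (∫⁻ s in Set.Ioc (0:ℝ) T, Gb s ^ (2:ℝ)) ^ ((1:ℝ) / 2)) ^ 2 :=
        pow_le_pow_left' hCS 2
    _ = (∫⁻ s in Set.Ioc (0:ℝ) T, Fb s ^ (2:ℝ)) *
          (∫⁻ s in Set.Ioc (0:ℝ) T, Gb s ^ (2:ℝ)) := by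
        rw [mul_pow, hhalf, hhalf]
    _ ≤ (∫⁻ s in Set.Ioc (0:ℝ) T, Fb s ^ (2:ℝ)) * ENNReal.ofReal (2 / (θ - 1)) :=
        mul_le_mul_right stepE _
    _ = ENNReal.ofReal (2 / (θ - 1)) * (∫⁻ s in Set.Ioc (0:ℝ) T, Fb s ^ (2:ℝ)) :=
        mul_comm _ _
    _ = ENNReal.ofReal (2 / (θ - 1)) *
        ∫⁻ s in Set.Ioc (0:ℝ) T,
          ENNReal.ofReal
            (Real.exp (2 * θ * ∫ r in Set.Ioc (0:ℝ) s, (μ r + 1 / 2 * (ν r) ^ 2)) *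
              ((h s) ^ 2 / (μ s + (ν s) ^ 2))) := by rw [stepF]
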